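/- Let N ≥ 2 be an integer, F̂ the transfer operator of the Farey map, φ₀(x) = x, and for n ≥ 0 let F̂_n φ₀ := ∑_{k=0}^{n} F̂^k φ₀. Then for all n ≥ 0, F̂_n φ₀(1) − F̂_n φ₀(1/N) ≤ N(N−1)/2. -/

import Mathlib

noncomputable def fareyHat (f : ℝ → ℝ) (x : ℝ) : ℝ :=
  (f (x / (1 + x)) + x * f (1 / (1 + x))) / (1 + x)

noncomputable def phi0 : ℝ → ℝ := fun x => x

noncomputable def fareySum (n : ℕ) (x : ℝ) : ℝ :=
  ∑ k ∈ Finset.range (n + 1), (fareyHat^[k] phi0) x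

open Set Finset

/-- The symmetrized auxiliary function `ψ_g(v) = v g(1-v) + (1-v) g v`. -/
noncomputable def psiF (g : ℝ → ℝ) (v : ℝ) : ℝ := v * g (1 - v) + (1 - v) * g v

/-- The invariant cone: nonnegative, monotone, concave on `[0,1]`. -/
def GoodF (g : ℝ → ℝ) : Prop :=
  MonotoneOn g (Set.Icc 0 1) ∧ ConcaveOn ℝ (Set.Icc 0 1) g ∧
    ∀ x ∈ Set.Icc (0:ℝ) 1, 0 ≤ g x

lemma psiF_symm (g : ℝ → ℝ) (v : ℝ) : psiF g (1 - v) = psiF g v := by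
  simp only [psiF, show (1:ℝ) - (1 - v) = v by ring]
  ring

lemma psiF_concave {g : ℝ → ℝ} (hm : MonotoneOn g (Set.Icc 0 1))
    (hc : ConcaveOn ℝ (Set.Icc 0 1) g) :
    ConcaveOn ℝ (Set.Icc (0:ℝ) 1) (psiF g) := by
  refine ⟨convex_Icc 0 1, ?_⟩
  intro v1 hv1 v2 hv2 a b ha hb hab
  obtain rfl : b = 1 - a := by linarith
  simp only [smul_eq_mul, psiF]
  have ha1 : a ≤ 1 := by linarith
  have hv10 : (0:ℝ) ≤ v1 := hv1.1
  have hv11 : v1 ≤ 1 := hv1.2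
  have hv20 : (0:ℝ) ≤ v2 := hv2.1
  have hv21 : v2 ≤ 1 := hv2.2
  have h1v1 : (1 - v1) ∈ Set.Icc (0:ℝ) 1 := ⟨by linarith, by linarith⟩
  have h1v2 : (1 - v2) ∈ Set.Icc (0:ℝ) 1 := ⟨by linarith, by linarith⟩
  have hm0 : 0 ≤ a * v1 + (1 - a) * v2 := by positivity
  have hm1 : a * v1 + (1 - a) * v2 ≤ 1 := by nlinarith
  -- concavity at the two pairs of points
  have hX := hc.2 h1v1 h1v2 ha hb hab
  have hY := hc.2 hv1 hv2 ha hb hab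
  simp only [smul_eq_mul] at hX hY
  have eX : a * (1 - v1) + (1 - a) * (1 - v2) = 1 - (a * v1 + (1 - a) * v2) := by ring
  rw [eX] at hX
  -- the rearrangement term
  have hre : 0 ≤ a * (1 - a) * (v2 - v1) *
      ((g (1 - v1) - g (1 - v2)) + (g v2 - g v1)) := by
    rcases le_total v1 v2 with h | h
    · have i1 : g (1 - v2) ≤ g (1 - v1) := hm h1v2 h1v1 (by linarith)
      have i2 : g v1 ≤ g v2 := hm hv1 hv2 h
      have : 0 ≤ (g (1 - v1) - g (1 - v2)) + (g v2 - g v1) := by linarith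
      have h2 : 0 ≤ a * (1 - a) * (v2 - v1) := by
        apply mul_nonneg (by positivity) (by linarith)
      exact mul_nonneg h2 this
    · have i1 : g (1 - v1) ≤ g (1 - v2) := hm h1v1 h1v2 (by linarith)
      have i2 : g v2 ≤ g v1 := hm hv2 hv1 h
      have h1 : (g (1 - v1) - g (1 - v2)) + (g v2 - g v1) ≤ 0 := by linarith
      have h2 : a * (1 - a) * (v2 - v1) ≤ 0 :=
        mul_nonpos_of_nonneg_of_nonpos (by positivity) (by linarith)
      nlinarith [mul_nonneg (neg_nonneg.mpr h2) (neg_nonneg.mpr h1)]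
  have hA := mul_le_mul_of_nonneg_left hX hm0
  have hB := mul_le_mul_of_nonneg_left hY (by linarith : (0:ℝ) ≤ 1 - (a * v1 + (1 - a) * v2))
  nlinarith [hA, hB, hre]

lemma psiF_anti {g : ℝ → ℝ} (hψ : ConcaveOn ℝ (Set.Icc (0:ℝ) 1) (psiF g)) :
    ∀ v w : ℝ, 1/2 ≤ v → v ≤ w → w ≤ 1 → psiF g w ≤ psiF g v := by
  intro v w hv hvw hw
  rcases eq_or_lt_of_le hvw with rfl | hlt
  · exact le_refl _
  · have hw2 : (1:ℝ)/2 < w := lt_of_le_of_lt hv hlt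
    have hden : (0:ℝ) < 2*w - 1 := by linarith
    set lam : ℝ := (w - v) / (2*w - 1) with hlam
    have hlam0 : 0 ≤ lam := by
      apply div_nonneg (by linarith) (by linarith)
    have hlam1 : lam ≤ 1 := by
      rw [hlam, div_le_one hden]; linarith
    have h1w : (1 - w) ∈ Set.Icc (0:ℝ) 1 := ⟨by linarith, by linarith⟩
    have hwmem : w ∈ Set.Icc (0:ℝ) 1 := ⟨by linarith, hw⟩
    have hsum : lam + (1 - lam) = 1 := by ring
    have hcon := hψ.2 h1w hwmem hlam0 (by linarith) hsum
    simp only [smul_eq_mul] at hcon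
    have hpt : lam * (1 - w) + (1 - lam) * w = v := by
      have hl : lam * (2*w - 1) = w - v := div_mul_cancel₀ _ hden.ne'
      linear_combination -hl
    rw [hpt, psiF_symm] at hcon
    linarith [hcon]

lemma fareyHat_eq_psiF (g : ℝ → ℝ) (x : ℝ) (hx : 0 ≤ x) :
    fareyHat g x = psiF g (1 / (1 + x)) := by
  have h1x : (0:ℝ) < 1 + x := by linarith
  have e : 1 - 1 / (1 + x) = x / (1 + x) := by field_simp; ring
  simp only [fareyHat, psiF, e]
  try field_simp
  try ring

lemma inv_one_add_mem (x : ℝ) (hx : x ∈ Set.Icc (0:ℝ) 1) :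
    1 / (1 + x) ∈ Set.Icc (1/2 : ℝ) 1 := by
  obtain ⟨h0, h1⟩ := hx
  constructor
  · rw [div_le_div_iff₀ (by norm_num) (by linarith)]; linarith
  · rw [div_le_one (by linarith)]; linarith

lemma GoodF_fareyHat {g : ℝ → ℝ} (hg : GoodF g) : GoodF (fareyHat g) := by
  obtain ⟨hm, hc, hpos⟩ := hg
  have hψc := psiF_concave hm hc
  have hψa := psiF_anti hψc
  have hIccsub : Set.Icc (1/2 : ℝ) 1 ⊆ Set.Icc (0:ℝ) 1 := by
    apply Set.Icc_subset_Icc (by norm_num) (le_refl _)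
  refine ⟨?_, ⟨convex_Icc 0 1, ?_⟩, ?_⟩
  · -- monotone
    intro x hx y hy hxy
    rw [fareyHat_eq_psiF g x hx.1, fareyHat_eq_psiF g y hy.1]
    have hvy := inv_one_add_mem y hy
    have hvx := inv_one_add_mem x hx
    have hle : 1 / (1 + y) ≤ 1 / (1 + x) := by
      apply div_le_div_of_nonneg_left (by norm_num) (by linarith [hx.1]) (by linarith)
    exact hψa _ _ hvy.1 hle hvx.2
  · -- concave
    intro x hx y hy a b ha hb hab
    obtain rfl : b = 1 - a := by linarith
    simp only [smul_eq_mul]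
    have ha1 : a ≤ 1 := by linarith
    have hx0 := hx.1; have hx1 := hx.2
    have hy0 := hy.1; have hy1 := hy.2
    have hz0 : 0 ≤ a * x + (1 - a) * y := by positivity
    have hz1 : a * x + (1 - a) * y ≤ 1 := by nlinarith
    have hzmem : a * x + (1 - a) * y ∈ Set.Icc (0:ℝ) 1 := ⟨hz0, hz1⟩
    rw [fareyHat_eq_psiF g x hx0, fareyHat_eq_psiF g y hy0,
      fareyHat_eq_psiF g _ hz0]
    have hdx : (0:ℝ) < 1 + x := by linarith
    have hdy : (0:ℝ) < 1 + y := by linarith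
    have hdz : (0:ℝ) < 1 + (a * x + (1 - a) * y) := by linarith
    set w : ℝ := a * (1 / (1 + x)) + (1 - a) * (1 / (1 + y)) with hw
    have hvx := inv_one_add_mem x hx
    have hvy := inv_one_add_mem y hy
    have hvz := inv_one_add_mem _ hzmem
    have hw12 : 1/2 ≤ w := by
      rw [hw]; nlinarith [hvx.1, hvy.1]
    have hw1 : w ≤ 1 := by
      rw [hw]; nlinarith [hvx.2, hvy.2]
    -- convexity of 1/(1+·)
    have hkey : 1 / (1 + (a * x + (1 - a) * y)) ≤ w := by
      rw [hw, mul_one_div, mul_one_div, div_add_div _ _ (ne_of_gt hdx) (ne_of_gt hdy),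
        div_le_div_iff₀ hdz (by positivity)]
      nlinarith [mul_nonneg (mul_nonneg ha (by linarith : (0:ℝ) ≤ 1 - a)) (sq_nonneg (x - y))]
    -- combine: ψ(1/(1+z)) ≥ ψ(w) ≥ a ψ(..x) + (1-a) ψ(..y)
    have h1 : psiF g w ≤ psiF g (1 / (1 + (a * x + (1 - a) * y))) :=
      hψa _ _ hvz.1 hkey hw1
    have h2 := hψc.2 (hIccsub hvx) (hIccsub hvy) ha hb hab
    simp only [smul_eq_mul] at h2
    rw [← hw] at h2
    linarith
  · -- nonneg
    intro x hx
    obtain ⟨h0, h1⟩ := hx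
    have h1x : (0:ℝ) < 1 + x := by linarith
    have m1 : x / (1 + x) ∈ Set.Icc (0:ℝ) 1 := by
      constructor
      · positivity
      · rw [div_le_one h1x]; linarith
    have m2 : 1 / (1 + x) ∈ Set.Icc (0:ℝ) 1 :=
      hIccsub (inv_one_add_mem x ⟨h0, h1⟩)
    have := hpos _ m1
    have := hpos _ m2
    simp only [fareyHat]
    positivity

lemma GoodF_iter (k : ℕ) : GoodF (fareyHat^[k] phi0) := by
  induction k with
  | zero =>
    refine ⟨?_, ⟨convex_Icc 0 1, ?_⟩, ?_⟩
    · intro x _ y _ hxy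
      simpa [phi0] using hxy
    · intro x _ y _ a b _ _ _
      simp [phi0, smul_eq_mul]
    · intro x hx
      simpa [phi0] using hx.1
  | succ k ih =>
    rw [Function.iterate_succ_apply']
    exact GoodF_fareyHat ih

lemma gk_nonneg (k : ℕ) {x : ℝ} (h0 : 0 ≤ x) (h1 : x ≤ 1) :
    0 ≤ (fareyHat^[k] phi0) x :=
  (GoodF_iter k).2.2 x ⟨h0, h1⟩

lemma gk_mono (k : ℕ) {x : ℝ} (h0 : 0 ≤ x) (h1 : x ≤ 1) :
    (fareyHat^[k] phi0) x ≤ (fareyHat^[k] phi0) 1 :=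
  (GoodF_iter k).1 ⟨h0, h1⟩ ⟨by norm_num, le_refl 1⟩ h1

lemma fareySum_le_at_one (n : ℕ) {x : ℝ} (h0 : 0 ≤ x) (h1 : x ≤ 1) :
    fareySum n x ≤ fareySum n 1 := by
  unfold fareySum
  exact Finset.sum_le_sum (fun k _ => gk_mono k h0 h1)

lemma gk_succ_one (k : ℕ) :
    (fareyHat^[k+1] phi0) 1 = (fareyHat^[k] phi0) (1/2) := by
  rw [Function.iterate_succ_apply']
  simp only [fareyHat]
  norm_num

lemma fareySum_base (n : ℕ) :
    fareySum n 1 - fareySum n (1/2) = 1 - (fareyHat^[n+1] phi0) 1 := by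
  unfold fareySum
  rw [← Finset.sum_sub_distrib]
  have : ∀ k ∈ Finset.range (n+1),
      (fareyHat^[k] phi0) 1 - (fareyHat^[k] phi0) (1/2)
      = (fareyHat^[k] phi0) 1 - (fareyHat^[k+1] phi0) 1 := by
    intro k _
    rw [gk_succ_one k]
  rw [Finset.sum_congr rfl this, Finset.sum_range_sub' (fun k => (fareyHat^[k] phi0) 1)]
  simp [phi0]

lemma fareySum_succ_pt (n : ℕ) (x : ℝ) :
    fareySum (n+1) x = x + fareyHat (fun y => fareySum n y) x := by
  unfold fareySum
  rw [Finset.sum_range_succ' (fun k => (fareyHat^[k] phi0) x) (n+1)]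
  have h0 : (fareyHat^[0] phi0) x = x := by simp [phi0]
  have hstep : ∀ k, (fareyHat^[k+1] phi0) x = fareyHat (fareyHat^[k] phi0) x := by
    intro k; rw [Function.iterate_succ_apply']
  simp only [hstep, h0, fareyHat]
  rw [← Finset.sum_div, Finset.sum_add_distrib, ← Finset.mul_sum]
  ring

lemma fareyHat_at_inv (f : ℝ → ℝ) (M : ℝ) (hM : 0 < M) :
    fareyHat f (1/M) = (M * f (1/(M+1)) + f (M/(M+1))) / (M+1) := by
  have hM0 : M ≠ 0 := ne_of_gt hM
  have hM1 : M + 1 ≠ 0 := by positivity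
  have hd : (1:ℝ) + 1/M ≠ 0 := by positivity
  have ht : M * (1/M) = 1 := mul_one_div_cancel hM0
  have e1 : (1/M) / (1 + 1/M) = 1/(M+1) := by
    rw [div_eq_div_iff hd hM1]
    linear_combination ht
  have e2 : 1 / (1 + 1/M) = M/(M+1) := by
    rw [div_eq_div_iff hd hM1]
    linear_combination -ht
  simp only [fareyHat, e1, e2]
  rw [div_eq_div_iff hd hM1]
  linear_combination (f (M/(M+1)) - f (1/(M+1))) * ht

theorem fareySum_variation_bound (N : ℕ) (hN : 2 ≤ N) (n : ℕ) :
    fareySum n 1 - fareySum n (1 / (N : ℝ)) ≤ (N : ℝ) * ((N : ℝ) - 1) / 2 := by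
  induction N, hN using Nat.le_induction with
  | base =>
    have h2 : ((2:ℕ) : ℝ) = 2 := by norm_num
    rw [h2]
    have hb := fareySum_base n
    have hnn : 0 ≤ (fareyHat^[n+1] phi0) 1 := gk_nonneg (n+1) (by norm_num) (le_refl 1)
    norm_num
    linarith
  | succ N hN2 ih =>
    set M : ℝ := (N : ℝ) with hMdef
    have hM : (2:ℝ) ≤ M := by rw [hMdef]; exact_mod_cast hN2
    have hM0 : (0:ℝ) < M := by linarith
    have hM1 : (0:ℝ) < M + 1 := by linarith
    have hcast : ((N + 1 : ℕ) : ℝ) = M + 1 := by push_cast; rw [hMdef]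
    rw [hcast]
    set A := fareySum n 1 with hA
    set B := fareySum n (1/M) with hB
    set C := fareySum n (1/(M+1)) with hC
    set D := fareySum n (M/(M+1)) with hD
    set E := (fareyHat^[n+1] phi0) (1/M) with hE
    -- the key identity
    have key : fareyHat (fun y => fareySum n y) (1/M) = (M * C + D) / (M+1) :=
      fareyHat_at_inv _ M hM0
    have rec1 : fareySum (n+1) (1/M) = 1/M + fareyHat (fun y => fareySum n y) (1/M) :=
      fareySum_succ_pt n (1/M)
    have split1 : fareySum (n+1) (1/M) = B + E := by
      rw [hB, hE]
      unfold fareySum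
      rw [Finset.sum_range_succ]
    have eq1 : (M * C + D) / (M+1) = B + E - 1/M := by
      linarith [key, rec1, split1]
    have P1 : M^2 * C + M * D = M * (M+1) * B + M * (M+1) * E - (M+1) := by
      have h := eq1
      field_simp at h
      linarith [h]
    -- bounds
    have hDle : D ≤ A := by
      rw [hD, hA]
      apply fareySum_le_at_one
      · positivity
      · rw [div_le_one hM1]; linarith
    have hEnn : 0 ≤ E := by
      rw [hE]
      apply gk_nonneg
      · positivity
      · rw [div_le_one hM0]; linarith
    -- final arithmetic
    nlinarith [P1, mul_le_mul_of_nonneg_left hDle (le_of_lt hM0),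
      mul_nonneg (mul_nonneg (le_of_lt hM0) (le_of_lt hM1)) hEnn,
      mul_le_mul_of_nonneg_left ih (by positivity : (0:ℝ) ≤ M * (M+1)),
      sq_nonneg M, mul_pos hM0 hM0, mul_pos (mul_pos hM0 hM0) hM0]
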